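/- For σ > 0, the equation z^σ·(σ(z−1)² + 1) = exp(σ(z²−1)/2) has exactly two roots on [1,∞), namely z = 1 and a second root ζ_σ satisfying ζ_σ > √((1+σ)/σ) > 1; furthermore z^σ·(σ(z−1)² + 1) > exp(σ(z²−1)/2) for all z ∈ (1, ζ_σ). -/

import Mathlib

open Real

theorem stmt_1 (σ : ℝ) (hσ : 0 < σ) :
    ∃ ζ : ℝ, Real.sqrt ((1 + σ) / σ) < ζ ∧ 1 < Real.sqrt ((1 + σ) / σ) ∧
      ζ ^ σ * (σ * (ζ - 1) ^ 2 + 1) = Real.exp (σ * (ζ ^ 2 - 1) / 2) ∧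
      (∀ z : ℝ, 1 ≤ z →
        z ^ σ * (σ * (z - 1) ^ 2 + 1) = Real.exp (σ * (z ^ 2 - 1) / 2) →
        z = 1 ∨ z = ζ) ∧
      (∀ z ∈ Set.Ioo (1 : ℝ) ζ,
        z ^ σ * (σ * (z - 1) ^ 2 + 1) > Real.exp (σ * (z ^ 2 - 1) / 2)) := by
  set w := Real.sqrt ((1 + σ) / σ) with hwdef
  have hratio : (1:ℝ) < (1 + σ) / σ := by
    rw [lt_div_iff₀ hσ]; linarith
  have hw1 : 1 < w := by
    rw [hwdef, Real.lt_sqrt (by norm_num)]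
    simpa using hratio
  have hwpos : 0 < w := by linarith
  have hwsq : w ^ 2 = (1 + σ) / σ := Real.sq_sqrt (by positivity)
  set g : ℝ → ℝ := fun z => σ * Real.log z + Real.log (σ * (z - 1) ^ 2 + 1)
      - σ * (z ^ 2 - 1) / 2 with hgdef
  have hquad : ∀ z : ℝ, 0 < σ * (z - 1) ^ 2 + 1 := fun z => by positivity
  -- derivative of g
  have hderiv : ∀ z : ℝ, 0 < z → HasDerivAt g
      (σ / z + σ * (2 * (z - 1)) / (σ * (z - 1) ^ 2 + 1) - σ * z) z := by
    intro z hz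
    have h1 : HasDerivAt (fun z : ℝ => σ * Real.log z) (σ / z) z := by
      simpa [div_eq_mul_inv] using (Real.hasDerivAt_log hz.ne').const_mul σ
    have h2 : HasDerivAt (fun z : ℝ => σ * (z - 1) ^ 2 + 1) (σ * (2 * (z - 1))) z := by
      have hb : HasDerivAt (fun z : ℝ => z - 1) 1 z := (hasDerivAt_id z).sub_const 1
      have := ((hb.pow 2).const_mul σ).add_const 1
      exact this.congr_deriv (by ring)
    have h3 : HasDerivAt (fun z : ℝ => Real.log (σ * (z - 1) ^ 2 + 1))
        (σ * (2 * (z - 1)) / (σ * (z - 1) ^ 2 + 1)) z := h2.log (hquad z).ne'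
    have h4 : HasDerivAt (fun z : ℝ => σ * (z ^ 2 - 1) / 2) (σ * z) z := by
      have hp : HasDerivAt (fun z : ℝ => z ^ 2) (2 * z) z := by
        simpa using hasDerivAt_pow 2 z
      have := ((hp.sub_const 1).const_mul σ).div_const 2
      exact this.congr_deriv (by ring)
    exact (h1.add h3).sub h4
  have hDeq : ∀ z : ℝ, 0 < z →
      σ / z + σ * (2 * (z - 1)) / (σ * (z - 1) ^ 2 + 1) - σ * z
        = σ * (z - 1) ^ 2 * (1 - σ * (z ^ 2 - 1)) / (z * (σ * (z - 1) ^ 2 + 1)) := by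
    intro z hz
    field_simp
    ring
  have hderiv' : ∀ z : ℝ, 0 < z → deriv g z
      = σ * (z - 1) ^ 2 * (1 - σ * (z ^ 2 - 1)) / (z * (σ * (z - 1) ^ 2 + 1)) := by
    intro z hz
    rw [(hderiv z hz).deriv, hDeq z hz]
  have hcont : ∀ s : Set ℝ, s ⊆ Set.Ioi (0:ℝ) → ContinuousOn g s := by
    intro s hs z hz
    exact ((hderiv z (hs hz)).continuousAt).continuousWithinAt
  -- strict mono on [1, w]
  have hmono : StrictMonoOn g (Set.Icc 1 w) := by
    apply strictMonoOn_of_deriv_pos (convex_Icc 1 w)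
    · exact hcont _ (fun x hx => lt_of_lt_of_le one_pos hx.1)
    · intro x hx
      rw [interior_Icc] at hx
      have hx0 : (0:ℝ) < x := by linarith [hx.1]
      rw [hderiv' x hx0]
      have hx2 : x ^ 2 < w ^ 2 := pow_lt_pow_left₀ hx.2 (by linarith [hx.1]) (by norm_num)
      rw [hwsq] at hx2
      have hnum : 0 < 1 - σ * (x ^ 2 - 1) := by
        have : σ * x ^ 2 < 1 + σ := by
          calc σ * x ^ 2 < σ * ((1 + σ) / σ) := by nlinarith
          _ = 1 + σ := by field_simp
        nlinarith
      have h1x : (0:ℝ) < (x - 1) ^ 2 := by nlinarith [hx.1]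
      positivity
  -- strict anti on [w, ∞)
  have hanti : StrictAntiOn g (Set.Ici w) := by
    apply strictAntiOn_of_deriv_neg (convex_Ici w)
    · exact hcont _ (fun x hx => lt_of_lt_of_le hwpos hx)
    · intro x hx
      rw [interior_Ici] at hx
      have hx0 : (0:ℝ) < x := lt_trans hwpos hx
      rw [hderiv' x hx0]
      have hx2 : w ^ 2 < x ^ 2 := pow_lt_pow_left₀ hx hwpos.le (by norm_num)
      rw [hwsq] at hx2
      have hnum : 1 - σ * (x ^ 2 - 1) < 0 := by
        have : 1 + σ < σ * x ^ 2 := by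
          calc (1:ℝ) + σ = σ * ((1 + σ) / σ) := by field_simp
          _ < σ * x ^ 2 := by nlinarith
        nlinarith
      have h1x : (0:ℝ) < (x - 1) ^ 2 := by nlinarith [hw1, hx]
      have hden : 0 < x * (σ * (x - 1) ^ 2 + 1) := by positivity
      apply div_neg_of_neg_of_pos _ hden
      exact mul_neg_of_pos_of_neg (by positivity) hnum
  have hg1 : g 1 = 0 := by simp [hgdef]
  have hgw : 0 < g w := by
    have := hmono (Set.mem_Icc.mpr ⟨le_refl 1, hw1.le⟩)
      (Set.mem_Icc.mpr ⟨hw1.le, le_refl w⟩) hw1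
    rwa [hg1] at this
  -- explicit point where g is negative
  set s := Real.sqrt σ with hsdef
  have hspos : 0 < s := Real.sqrt_pos.mpr hσ
  have hssq : s ^ 2 = σ := Real.sq_sqrt hσ.le
  set z₀ := 1 + 5 / s with hz0def
  have hz01 : 1 < z₀ := by
    rw [hz0def]
    have : 0 < 5 / s := by positivity
    linarith
  have hsne : s ≠ 0 := hspos.ne'
  have hwz0 : w < z₀ := by
    have h1 : w ≤ 1 + 1 / s := by
      rw [hwdef]
      have hle : (1 + σ) / σ ≤ (1 + 1 / s) ^ 2 := by
        rw [div_le_iff₀ hσ, ← hssq]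
        field_simp
        nlinarith [hspos, sq_nonneg s]
      calc Real.sqrt ((1 + σ)/σ) ≤ Real.sqrt ((1 + 1/s)^2) := Real.sqrt_le_sqrt hle
      _ = 1 + 1/s := Real.sqrt_sq (by positivity)
    have h2 : 1/s < 5/s := by
      apply (div_lt_div_iff_of_pos_right hspos).mpr
      norm_num
    rw [hz0def]; linarith
  have hgz0 : g z₀ < 0 := by
    have hz0pos : (0:ℝ) < z₀ := by linarith
    have hA : σ * (z₀ - 1) ^ 2 + 1 = 26 := by
      rw [hz0def, ← hssq]
      field_simp
      ring
    have hC : σ * (z₀ ^ 2 - 1) = 10 * s + 25 := by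
      rw [hz0def, ← hssq]
      field_simp
      ring
    have hlog : Real.log z₀ ≤ 5 / s := by
      have := Real.log_le_sub_one_of_pos hz0pos
      rw [hz0def] at this ⊢
      linarith
    have hB : σ * (5 / s) = 5 * s := by
      rw [← hssq]; field_simp
    have hlogmul : σ * Real.log z₀ ≤ 5 * s := by
      calc σ * Real.log z₀ ≤ σ * (5 / s) := mul_le_mul_of_nonneg_left hlog hσ.le
      _ = 5 * s := hB
    have hsqrt26 : Real.sqrt 26 ≤ 6 := by
      rw [show (6:ℝ) = Real.sqrt 36 by
        rw [show (36:ℝ) = 6 ^ 2 by norm_num, Real.sqrt_sq (by norm_num)]]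
      exact Real.sqrt_le_sqrt (by norm_num)
    have hlog26 : Real.log 26 ≤ 10 := by
      have h1 : Real.log 26 = 2 * Real.log (Real.sqrt 26) := by
        rw [Real.log_sqrt (by norm_num)]; ring
      have h2 : Real.log (Real.sqrt 26) ≤ Real.sqrt 26 - 1 :=
        Real.log_le_sub_one_of_pos (Real.sqrt_pos.mpr (by norm_num))
      linarith
    have hgz0eq : g z₀ = σ * Real.log z₀ + Real.log 26 - (10 * s + 25) / 2 := by
      rw [hgdef]
      simp only
      rw [hA]
      rw [show σ * (z₀ ^ 2 - 1) / 2 = (10 * s + 25) / 2 by rw [hC]]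
    rw [hgz0eq]
    linarith
  -- IVT to get ζ
  have hivt := intermediate_value_Icc' (le_of_lt hwz0)
    (hcont _ (fun x hx => lt_of_lt_of_le hwpos hx.1))
  have h0mem : (0:ℝ) ∈ Set.Icc (g z₀) (g w) := Set.mem_Icc.mpr ⟨hgz0.le, hgw.le⟩
  obtain ⟨ζ, hζmem, hζ0⟩ := hivt h0mem
  have hζw : w < ζ := by
    rcases lt_or_eq_of_le hζmem.1 with h | h
    · exact h
    · exfalso; rw [h, hζ0] at hgw; exact lt_irrefl 0 hgw
  have hζ1 : 1 < ζ := lt_trans hw1 hζw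
  have hζpos : 0 < ζ := by linarith
  -- key conversion
  have key : ∀ z : ℝ, 0 < z →
      z ^ σ * (σ * (z - 1) ^ 2 + 1) = Real.exp (g z + σ * (z ^ 2 - 1) / 2) := by
    intro z hz
    have hsum : g z + σ * (z ^ 2 - 1) / 2
        = Real.log z * σ + Real.log (σ * (z - 1) ^ 2 + 1) := by
      rw [hgdef]; ring
    rw [hsum, Real.exp_add, Real.exp_log (hquad z), Real.rpow_def_of_pos hz]
  refine ⟨ζ, hζw, hw1, ?_, ?_, ?_⟩
  · rw [key ζ hζpos, hζ0]
    norm_num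
  · intro z hz heq
    rcases eq_or_lt_of_le hz with h | h
    · exact Or.inl h.symm
    · right
      have hz0 : (0:ℝ) < z := by linarith
      rw [key z hz0, Real.exp_eq_exp] at heq
      have hgz : g z = 0 := by
        have h2 := heq
        rw [add_eq_right] at h2
        exact h2
      rcases le_or_gt z w with hle | hlt
      · exfalso
        have := hmono (Set.mem_Icc.mpr ⟨le_refl 1, hw1.le⟩)
          (Set.mem_Icc.mpr ⟨h.le, hle⟩) h
        rw [hg1, hgz] at this
        exact lt_irrefl 0 this
      · exact hanti.injOn (Set.mem_Ici.mpr hlt.le) (Set.mem_Ici.mpr hζw.le)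
          (by rw [hgz, hζ0])
  · intro z hz
    have hz0 : (0:ℝ) < z := by linarith [hz.1]
    have hgz : 0 < g z := by
      rcases le_or_gt z w with hle | hlt
      · have := hmono (Set.mem_Icc.mpr ⟨le_refl 1, hw1.le⟩)
          (Set.mem_Icc.mpr ⟨hz.1.le, hle⟩) hz.1
        rwa [hg1] at this
      · have := hanti (Set.mem_Ici.mpr hlt.le) (Set.mem_Ici.mpr hζw.le) hz.2
        rwa [hζ0] at this
    rw [key z hz0]
    exact Real.exp_lt_exp.mpr ((lt_add_iff_pos_left _).mpr hgz)
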